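/- (Gompertz form of the hazard.) Let f₀ > 0 and β > 0, and for L > t ≥ 0 define θ_rem(t, L) = ∫ₜ^L f₀ * exp(-β * s) ds. Then 1 / θ_rem(t, L) = (β / f₀) * exp(β * t) / (1 - exp(-β * (L - t))), and for each fixed t ≥ 0, 1 / θ_rem(t, L) converges to (β / f₀) * exp(β * t) as L → ∞; moreover (β / f₀) * exp(β * t) ≤ 1 / θ_rem(t, L) for every L > t. Hence the hazard has the Gompertz exponential form e^{β t} with rate β in the regime t ≪ L. -/

import Mathlib

open intervalIntegral Filter

/-- Gompertz form of the hazard: for `θ_rem t L = ∫ₜ^L f₀ e^{-βs} ds`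
one has `1 / θ_rem t L = (β / f₀) * e^{β t} / (1 - e^{-β (L - t)})`; for fixed
`t ≥ 0`, `1 / θ_rem t L → (β / f₀) * e^{β t}` as `L → ∞`, and
`(β / f₀) * e^{β t} ≤ 1 / θ_rem t L` for every `L > t`: the hazard has the Gompertz
exponential form with rate `β` in the regime `t ≪ L`. -/
theorem gompertz_hazard
    (f₀ β : ℝ) (hf₀ : 0 < f₀) (hβ : 0 < β)
    (θrem : ℝ → ℝ → ℝ)
    (hθrem : ∀ t L : ℝ, θrem t L = ∫ s in t..L, f₀ * Real.exp (-β * s)) :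
    ∀ t : ℝ, 0 ≤ t →
      (∀ L : ℝ, t < L →
        1 / θrem t L =
          (β / f₀) * Real.exp (β * t) / (1 - Real.exp (-β * (L - t)))) ∧
      Tendsto (fun L => 1 / θrem t L) atTop
        (nhds ((β / f₀) * Real.exp (β * t))) ∧
      (∀ L : ℝ, t < L → (β / f₀) * Real.exp (β * t) ≤ 1 / θrem t L) := by
  have key : ∀ t L : ℝ, θrem t L = f₀ / β * (Real.exp (-β * t) - Real.exp (-β * L)) := by
    intro t L
    rw [hθrem]
    have hderiv : ∀ s ∈ Set.uIcc t L, HasDerivAt (fun x => -(f₀ / β) * Real.exp (-β * x))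
        (f₀ * Real.exp (-β * s)) s := by
      intro s _
      have h1 : HasDerivAt (fun x => -β * x) (-β) s := by
        simpa using (hasDerivAt_id s).const_mul (-β)
      have h2 := (h1.exp).const_mul (-(f₀ / β))
      refine h2.congr_deriv ?_
      field_simp [hβ.ne']
    rw [intervalIntegral.integral_eq_sub_of_hasDerivAt hderiv]
    · ring
    · apply Continuous.intervalIntegrable
      continuity
  intro t ht
  have hform : ∀ L : ℝ, t < L →
      1 / θrem t L = (β / f₀) * Real.exp (β * t) / (1 - Real.exp (-β * (L - t))) := by
    intro L hL
    rw [key]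
    have h2 : 1 - Real.exp (-β * (L - t)) > 0 := by
      have : Real.exp (-β * (L - t)) < 1 := by
        rw [Real.exp_lt_one_iff]; nlinarith
      linarith
    have hexp : Real.exp (-β * L) = Real.exp (-β * t) * Real.exp (-β * (L - t)) := by
      rw [← Real.exp_add]; ring_nf
    have hsplit : Real.exp (-β * t) - Real.exp (-β * L)
        = Real.exp (-β * t) * (1 - Real.exp (-β * (L - t))) := by rw [hexp]; ring
    have hinv : Real.exp (-β * t) = (Real.exp (β * t))⁻¹ := by
      rw [← Real.exp_neg]; ring_nf
    rw [hsplit, hinv]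
    rw [div_eq_div_iff (by positivity) (by positivity)]
    field_simp
  refine ⟨hform, ?_, ?_⟩
  · have h0 : Tendsto (fun L => Real.exp (-β * (L - t))) atTop (nhds 0) := by
      rw [Real.tendsto_exp_comp_nhds_zero]
      have h3 : Tendsto (fun L : ℝ => (L - t) * (-β)) atTop atBot :=
        (tendsto_atTop_add_const_right _ (-t) tendsto_id).atTop_mul_const_of_neg (by linarith)
      refine h3.congr fun L => by ring
    have h1 : Tendsto (fun L => (β / f₀) * Real.exp (β * t) / (1 - Real.exp (-β * (L - t))))
        atTop (nhds ((β / f₀) * Real.exp (β * t))) := by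
      have := Tendsto.div (tendsto_const_nhds (x := (β / f₀) * Real.exp (β * t)))
        ((tendsto_const_nhds (x := (1:ℝ))).sub h0) (by norm_num)
      simpa [Pi.div_def] using this
    apply h1.congr'
    filter_upwards [eventually_gt_atTop t] with L hL
    exact (hform L hL).symm
  · intro L hL
    rw [hform L hL]
    have h2 : 1 - Real.exp (-β * (L - t)) > 0 := by
      have : Real.exp (-β * (L - t)) < 1 := by
        rw [Real.exp_lt_one_iff]; nlinarith
      linarith
    have h3 : 1 - Real.exp (-β * (L - t)) ≤ 1 := by
      have := Real.exp_pos (-β * (L - t)); linarith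
    have hpos : 0 < (β / f₀) * Real.exp (β * t) :=
      mul_pos (div_pos hβ hf₀) (Real.exp_pos _)
    calc (β / f₀) * Real.exp (β * t) = (β / f₀) * Real.exp (β * t) / 1 := by ring
    _ ≤ (β / f₀) * Real.exp (β * t) / (1 - Real.exp (-β * (L - t))) := by
        apply div_le_div_of_nonneg_left hpos.le h2 h3
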